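/- With notation as above (α_t orthogonal to v), a class w with r(w) > 0 satisfies ⟨w, α_t⟩ ≤ 0 for all sufficiently large t if and only if either c₁(w)·H/r(w) < c₁(v)·H/r(v), or both c₁(w)·H/r(w) = c₁(v)·H/r(v) and χ(w⊗L)/r(w) ≤ χ(v⊗L)/r(v). -/
import Mathlib


noncomputable section

/-- Poincaré pairing on the extended Néron–Severi group `ℝ ⊕ N ⊕ ℝ`. -/
def ppair {N : Type*} [AddCommGroup N] [Module ℝ N]
    (B : N →ₗ[ℝ] N →ₗ[ℝ] ℝ) (u v : ℝ × N × ℝ) : ℝ :=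
  u.1 * v.2.2 + B u.2.1 v.2.1 + u.2.2 * v.1

/-- Riemann–Roch Euler characteristic of a class `(r, c, e)`. -/
def chiRR {N : Type*} [AddCommGroup N] [Module ℝ N]
    (B : N →ₗ[ℝ] N →ₗ[ℝ] ℝ) (K : N) (χ0 : ℝ) (w : ℝ × N × ℝ) : ℝ :=
  w.2.2 - B w.2.1 K / 2 + w.1 * χ0

/-- Formal `L`-twisted Euler characteristic `χ(w⊗L)`. -/
def chiL {N : Type*} [AddCommGroup N] [Module ℝ N]
    (B : N →ₗ[ℝ] N →ₗ[ℝ] ℝ) (K L : N) (χ0 : ℝ) (w : ℝ × N × ℝ) : ℝ :=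
  w.2.2 + B w.2.1 L + w.1 * B L L / 2 - B (w.2.1 + w.1 • L) K / 2 + w.1 * χ0

/-- The class `α_t = (1, -K/2 + L + tH, d_t)` orthogonal to `v`. -/
def alphaT {N : Type*} [AddCommGroup N] [Module ℝ N]
    (B : N →ₗ[ℝ] N →ₗ[ℝ] ℝ) (K L H : N) (χ0 : ℝ) (v : ℝ × N × ℝ) (t : ℝ) :
    ℝ × N × ℝ :=
  (1, -((1:ℝ)/2) • K + L + t • H,
    -chiRR B K χ0 v / v.1 - B v.2.1 (L + t • H) / v.1 + χ0)

private lemma lin_eventually (a c : ℝ) :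
    (∃ t0 : ℝ, ∀ t : ℝ, t0 ≤ t → a * t + c ≤ 0) ↔ a < 0 ∨ (a = 0 ∧ c ≤ 0) := by
  constructor
  · rintro ⟨t0, h⟩
    rcases lt_trichotomy a 0 with ha | ha | ha
    · exact Or.inl ha
    · refine Or.inr ⟨ha, ?_⟩
      have := h t0 le_rfl
      simpa [ha] using this
    · exfalso
      have ht : t0 ≤ max t0 ((1 - c) / a) := le_max_left _ _
      have h1 := h _ ht
      have h2 : (1 - c) / a ≤ max t0 ((1 - c) / a) := le_max_right _ _
      have h3 : 1 - c ≤ a * max t0 ((1 - c) / a) := by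
        rw [div_le_iff₀ ha] at h2; linarith [h2]
      linarith
  · rintro (ha | ⟨ha, hc⟩)
    · refine ⟨-c / a, fun t ht => ?_⟩
      have h1 : a * t ≤ a * (-c / a) := mul_le_mul_of_nonpos_left ht ha.le
      rw [mul_div_cancel₀ _ ha.ne] at h1
      linarith
    · exact ⟨0, fun t _ => by simp [ha, hc]⟩

/-- A class `w` with `r(w) > 0` satisfies `⟨w, α_t⟩ ≤ 0` for all
sufficiently large `t` iff either `μ_H(w) < μ_H(v)`, or the `H`-slopes are equal and
`χ(w⊗L)/r(w) ≤ χ(v⊗L)/r(v)` (the `L`-twisted `H`-Gieseker condition). -/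
theorem stmt2 {N : Type*} [AddCommGroup N] [Module ℝ N]
    (B : N →ₗ[ℝ] N →ₗ[ℝ] ℝ) (hsym : ∀ x y, B x y = B y x)
    (K L H : N) (χ0 : ℝ) (v w : ℝ × N × ℝ) (hv : 0 < v.1) (hw : 0 < w.1) :
    (∃ t0 : ℝ, ∀ t : ℝ, t0 ≤ t → ppair B w (alphaT B K L H χ0 v t) ≤ 0) ↔
      (B w.2.1 H / w.1 < B v.2.1 H / v.1 ∨
        (B w.2.1 H / w.1 = B v.2.1 H / v.1 ∧
          chiL B K L χ0 w / w.1 ≤ chiL B K L χ0 v / v.1)) := by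
  have hv' := hv.ne'
  have hw' := hw.ne'
  have key : ∀ t : ℝ, ppair B w (alphaT B K L H χ0 v t) =
      w.1 * ((B w.2.1 H / w.1 - B v.2.1 H / v.1) * t
        + (chiL B K L χ0 w / w.1 - chiL B K L χ0 v / v.1)) := by
    intro t
    simp only [ppair, alphaT, chiRR, chiL, map_add, map_smul, map_neg,
      LinearMap.add_apply, LinearMap.smul_apply, LinearMap.neg_apply, smul_eq_mul]
    field_simp
    ring
  set a := B w.2.1 H / w.1 - B v.2.1 H / v.1 with ha
  set c := chiL B K L χ0 w / w.1 - chiL B K L χ0 v / v.1 with hc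
  have h1 : (∃ t0 : ℝ, ∀ t : ℝ, t0 ≤ t → ppair B w (alphaT B K L H χ0 v t) ≤ 0) ↔
      (∃ t0 : ℝ, ∀ t : ℝ, t0 ≤ t → a * t + c ≤ 0) := by
    constructor <;> rintro ⟨t0, h⟩ <;> refine ⟨t0, fun t ht => ?_⟩
    · have := h t ht; rw [key t] at this; nlinarith
    · have := h t ht; rw [key t]; nlinarith
  rw [h1, lin_eventually, ha, hc]
  constructor
  · rintro (h | ⟨h, h2⟩)
    · exact Or.inl (by linarith)
    · exact Or.inr ⟨by linarith, by linarith⟩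
  · rintro (h | ⟨h, h2⟩)
    · exact Or.inl (by linarith)
    · exact Or.inr ⟨by linarith, by linarith⟩
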